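/- Let ω be a double form of bidegree (p,q) on V. Then c_g(g·ω) = g·(c_g ω) + (n − p − q)·ω. -/

import Mathlib

/-- Double forms on the inner product space `ℝⁿ` (with its standard inner product `g`),
described by their components with respect to the standard orthonormal basis: the component
at bidegree `(p, q)` is a real-valued function of `p` "row" indices and `q` "column" indices
(an element of `Λᵖ(ℝⁿ)* ⊗ Λ^q(ℝⁿ)*` is exactly such a component function which is
antisymmetric in each group of indices). -/
abbrev DoubleForm (n : ℕ) : Type :=
  ∀ p q : ℕ, (Fin p → Fin n) → (Fin q → Fin n) → ℝ

/-- `ω` is a double form of bidegree `(p, q)`: it is concentrated at `(p, q)` and is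
antisymmetric in each group of arguments. -/
def dfHasBidegree (n p q : ℕ) (ω : DoubleForm n) : Prop :=
  (∀ p' q', ¬(p' = p ∧ q' = q) → ω p' q' = 0) ∧
  (∀ (σ : Equiv.Perm (Fin p)) (x : Fin p → Fin n) (y : Fin q → Fin n),
      ω p q (x ∘ σ) y = ((Equiv.Perm.sign σ : ℤ) : ℝ) * ω p q x y) ∧
  (∀ (τ : Equiv.Perm (Fin q)) (x : Fin p → Fin n) (y : Fin q → Fin n),
      ω p q x (y ∘ τ) = ((Equiv.Perm.sign τ : ℤ) : ℝ) * ω p q x y)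

/-- The unit double form (the constant `1` in bidegree `(0,0)`). -/
noncomputable def dfOne (n : ℕ) : DoubleForm n
  | 0, 0, _, _ => 1
  | _, _, _, _ => 0

/-- The metric `g` (the standard inner product) as a `(1,1)` double form. -/
noncomputable def dfG (n : ℕ) : DoubleForm n
  | 1, 1, x, y => if x 0 = y 0 then 1 else 0
  | _, _, _, _ => 0

/-- The product of double forms: the wedge product (determinant convention) on each of the
two tensor factors, with no extra sign (so that `(θ₁⊗θ₂)·(θ₃⊗θ₄) = (θ₁∧θ₃)⊗(θ₂∧θ₄)`). -/
noncomputable def dfMul (n : ℕ) (ω θ : DoubleForm n) : DoubleForm n :=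
  fun p q x y =>
    ∑ p₁ : Fin (p + 1), ∑ q₁ : Fin (q + 1),
      (((p₁ : ℕ).factorial * (p - (p₁ : ℕ)).factorial *
          (q₁ : ℕ).factorial * (q - (q₁ : ℕ)).factorial : ℕ) : ℝ)⁻¹ *
        ∑ σ : Equiv.Perm (Fin p), ∑ τ : Equiv.Perm (Fin q),
          ((Equiv.Perm.sign σ : ℤ) : ℝ) * ((Equiv.Perm.sign τ : ℤ) : ℝ) *
            (ω (p₁ : ℕ) (q₁ : ℕ)
               (fun i => x (σ (Fin.castLE (Nat.lt_succ_iff.mp p₁.isLt) i)))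
               (fun j => y (τ (Fin.castLE (Nat.lt_succ_iff.mp q₁.isLt) j))) *
             θ (p - (p₁ : ℕ)) (q - (q₁ : ℕ))
               (fun i => x (σ ⟨(p₁ : ℕ) + (i : ℕ), by
                  have h1 := i.isLt; have h2 := p₁.isLt; omega⟩))
               (fun j => y (τ ⟨(q₁ : ℕ) + (j : ℕ), by
                  have h1 := j.isLt; have h2 := q₁.isLt; omega⟩)))

/-- Powers of a double form with respect to the product `dfMul`. -/
noncomputable def dfPow (n : ℕ) (ω : DoubleForm n) : ℕ → DoubleForm n
  | 0 => dfOne n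
  | m + 1 => dfMul n (dfPow n ω m) ω

/-- The contraction `c_g` with respect to the standard inner product: it maps the
`(p+1, q+1)` component to the `(p, q)` component by tracing over a pair of slots
(and is zero on bidegrees `(p, 0)` and `(0, q)`). -/
noncomputable def dfContr (n : ℕ) (ω : DoubleForm n) : DoubleForm n :=
  fun p q x y => ∑ i : Fin n, ω (p + 1) (q + 1) (Fin.cons i x) (Fin.cons i y)

/-- The natural inner product, at bidegree `(p, q)`, induced by `g` on double forms
(for which the monomials with strictly increasing indices are orthonormal). -/
noncomputable def dfInner (n p q : ℕ) (ω θ : DoubleForm n) : ℝ :=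
  ((p.factorial * q.factorial : ℕ) : ℝ)⁻¹ *
    ∑ x : Fin p → Fin n, ∑ y : Fin q → Fin n, ω p q x y * θ p q x y

/-- For a bilinear form `h` on `ℝⁿ` (given by its component matrix), the operator `F_h`,
inserting the `g`-symmetric endomorphism `H` associated to `h` into each slot in turn. -/
noncomputable def dfF (n : ℕ) (h : Fin n → Fin n → ℝ) (ω : DoubleForm n) : DoubleForm n :=
  fun p q x y =>
    (∑ k : Fin p, ∑ i : Fin n, h (x k) i * ω p q (Function.update x k i) y) +
    (∑ k : Fin q, ∑ i : Fin n, h (y k) i * ω p q x (Function.update y k i))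

/-- A bilinear form on `ℝⁿ` (given by its component matrix) as a `(1,1)` double form. -/
noncomputable def dfOfMatrix (n : ℕ) (h : Fin n → Fin n → ℝ) : DoubleForm n
  | 1, 1, x, y => h (x 0) (y 0)
  | _, _, _, _ => 0

/-- The component matrix of the `(1,1)` part of a double form. -/
noncomputable def dfMat (n : ℕ) (ω : DoubleForm n) : Fin n → Fin n → ℝ :=
  fun i j => ω 1 1 (fun _ => i) (fun _ => j)

/-- `R ∈ C²`: a `(2,2)` double form satisfying the symmetry
`R(x₁∧x₂ ⊗ y₁∧y₂) = R(y₁∧y₂ ⊗ x₁∧x₂)`. -/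
def dfIsC2 (n : ℕ) (R : DoubleForm n) : Prop :=
  dfHasBidegree n 2 2 R ∧ ∀ x y : Fin 2 → Fin n, R 2 2 x y = R 2 2 y x

/-- The operator `𝔑_R` : `(𝔑_R h)(v, w) = Σᵢ h(R(v, eᵢ)w, eᵢ)`, where the `(3,1)`-tensor of
`R` is determined by `g(R(x,y)z, u) = R(x∧y ⊗ z∧u)`. -/
noncomputable def curvAction (n : ℕ) (R : DoubleForm n) (h : Fin n → Fin n → ℝ) :
    Fin n → Fin n → ℝ :=
  fun v w => ∑ i : Fin n, ∑ u : Fin n, R 2 2 ![v, i] ![w, u] * h u i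

/-- The contraction associated to an arbitrary metric on `ℝⁿ` whose Gram matrix in the
standard basis is `G`: `c_{g'} ω = Σᵢⱼ (G⁻¹)ᵢⱼ ω(vᵢ∧… ⊗ vⱼ∧…)`. -/
noncomputable def dfContrM (n : ℕ) (G : Matrix (Fin n) (Fin n) ℝ) (ω : DoubleForm n) :
    DoubleForm n :=
  fun p q x y => ∑ i : Fin n, ∑ j : Fin n,
    (G⁻¹) i j * ω (p + 1) (q + 1) (Fin.cons i x) (Fin.cons j y)


open Equiv Equiv.Perm Finset

lemma dfG_eq_zero {n : ℕ} {a b : ℕ} (h : ¬(a = 1 ∧ b = 1)) (x : Fin a → Fin n)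
    (y : Fin b → Fin n) : dfG n a b x y = 0 := by
  match a, b with
  | 1, 1 => exact absurd ⟨rfl, rfl⟩ h
  | 0, _ => rfl
  | _+2, _ => rfl
  | 1, 0 => rfl
  | 1, _+2 => rfl

lemma dfG_one_one {n : ℕ} (x y : Fin 1 → Fin n) :
    dfG n 1 1 x y = if x 0 = y 0 then 1 else 0 := rfl

lemma mul_g_eq_zero {n : ℕ} (θ : DoubleForm n) (P Q : ℕ)
    (hθ : ∀ a b, ¬(a = P ∧ b = Q) → θ a b = 0)
    (a b : ℕ) (h : ¬(a = P + 1 ∧ b = Q + 1)) (x : Fin a → Fin n) (y : Fin b → Fin n) :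
    dfMul n (dfG n) θ a b x y = 0 := by
  unfold dfMul
  refine Finset.sum_eq_zero fun p₁ _ => ?_
  refine Finset.sum_eq_zero fun q₁ _ => ?_
  rw [mul_eq_zero]; right
  refine Finset.sum_eq_zero fun σ _ => ?_
  refine Finset.sum_eq_zero fun τ _ => ?_
  rw [mul_eq_zero]; right
  by_cases hg : (p₁ : ℕ) = 1 ∧ (q₁ : ℕ) = 1
  · rw [mul_eq_zero]; right
    have h1 := p₁.isLt
    have h2 := q₁.isLt
    have : ¬(a - (p₁ : ℕ) = P ∧ b - (q₁ : ℕ) = Q) := by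
      rintro ⟨rfl, rfl⟩; exact h ⟨by omega, by omega⟩
    rw [hθ _ _ this]; rfl
  · rw [mul_eq_zero]; left
    exact dfG_eq_zero hg _ _

lemma fin_one_add {m : ℕ} (i : Fin m) (h : 1 + (i:ℕ) < m + 1) :
    (⟨1 + (i:ℕ), h⟩ : Fin (m+1)) = i.succ := by
  ext; simp [Nat.add_comm]

lemma df_idx_red {n : ℕ} (θ : DoubleForm n) (a b : ℕ) (f : Fin (a+1-1) → Fin n)
    (g : Fin (b+1-1) → Fin n) : θ (a+1-1) (b+1-1) f g = θ a b f g := rfl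

lemma cancel_helper (se sf d T a b : ℝ) (he : se * se = 1) (hf : sf * sf = 1) :
    a * se * (b * sf) * (d * (se * (sf * T))) = a * b * d * T := by
  have h : a * se * (b * sf) * (d * (se * (sf * T))) = a * b * d * T * (se * se) * (sf * sf) := by
    ring
  rw [h, he, hf, mul_one, mul_one]

lemma sgn_sq {m : ℕ} (e : Perm (Fin m)) :
    ((Perm.sign e : ℤ) : ℝ) * ((Perm.sign e : ℤ) : ℝ) = 1 := by
  rcases Int.units_eq_one_or (Perm.sign e) with h | h <;> rw [h] <;> norm_num

lemma perm_sum_eval {n : ℕ} (θ : DoubleForm n) (P Q : ℕ)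
    (hA : ∀ (σ : Perm (Fin P)) (x : Fin P → Fin n) (y : Fin Q → Fin n),
        θ P Q (x ∘ σ) y = ((Perm.sign σ : ℤ) : ℝ) * θ P Q x y)
    (hB : ∀ (τ : Perm (Fin Q)) (x : Fin P → Fin n) (y : Fin Q → Fin n),
        θ P Q x (y ∘ τ) = ((Perm.sign τ : ℤ) : ℝ) * θ P Q x y)
    (x : Fin (P+1) → Fin n) (y : Fin (Q+1) → Fin n) :
    (((P.factorial * Q.factorial : ℕ)) : ℝ)⁻¹ *
      ∑ σ : Perm (Fin (P+1)), ∑ τ : Perm (Fin (Q+1)),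
        ((Perm.sign σ : ℤ) : ℝ) * ((Perm.sign τ : ℤ) : ℝ) *
          ((if x (σ 0) = y (τ 0) then (1:ℝ) else 0) *
            θ P Q (fun i => x (σ i.succ)) (fun j => y (τ j.succ))) =
    ∑ k : Fin (P+1), ∑ l : Fin (Q+1),
      (if k = 0 then (1:ℝ) else -1) * (if l = 0 then (1:ℝ) else -1) *
      (if x k = y l then (1:ℝ) else 0) *
      θ P Q (fun i => x (Equiv.swap 0 k i.succ)) (fun j => y (Equiv.swap 0 l j.succ)) := by
  have gen : ∀ (F : Perm (Fin (P+1)) → Perm (Fin (Q+1)) → ℝ),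
      ∑ σ : Perm (Fin (P+1)), ∑ τ : Perm (Fin (Q+1)), F σ τ =
      ∑ k : Fin (P+1), ∑ e : Perm (Fin P), ∑ l : Fin (Q+1), ∑ f : Perm (Fin Q),
        F (Equiv.Perm.decomposeFin.symm (k, e)) (Equiv.Perm.decomposeFin.symm (l, f)) := by
    intro F
    rw [← Equiv.sum_comp (Equiv.Perm.decomposeFin.symm)
        (fun σ => ∑ τ : Perm (Fin (Q+1)), F σ τ), Fintype.sum_prod_type]
    refine Finset.sum_congr rfl fun k _ => Finset.sum_congr rfl fun e _ => ?_
    rw [← Equiv.sum_comp (Equiv.Perm.decomposeFin.symm)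
        (fun τ => F (Equiv.Perm.decomposeFin.symm (k, e)) τ), Fintype.sum_prod_type]
  rw [gen]
  have inner : ∀ (k : Fin (P+1)) (e : Perm (Fin P)) (l : Fin (Q+1)) (f : Perm (Fin Q)),
      ((Perm.sign (Equiv.Perm.decomposeFin.symm (k, e)) : ℤ) : ℝ) *
        ((Perm.sign (Equiv.Perm.decomposeFin.symm (l, f)) : ℤ) : ℝ) *
        ((if x (Equiv.Perm.decomposeFin.symm (k, e) 0) =
              y (Equiv.Perm.decomposeFin.symm (l, f) 0) then (1:ℝ) else 0) *
          θ P Q (fun i => x (Equiv.Perm.decomposeFin.symm (k, e) i.succ))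
            (fun j => y (Equiv.Perm.decomposeFin.symm (l, f) j.succ))) =
      (if k = 0 then (1:ℝ) else -1) * (if l = 0 then (1:ℝ) else -1) *
        (if x k = y l then (1:ℝ) else 0) *
        θ P Q (fun i => x (Equiv.swap 0 k i.succ)) (fun j => y (Equiv.swap 0 l j.succ)) := by
    intro k e l f
    rw [Equiv.Perm.decomposeFin.symm_sign, Equiv.Perm.decomposeFin.symm_sign]
    simp only [Equiv.Perm.decomposeFin_symm_apply_zero,
      Equiv.Perm.decomposeFin_symm_apply_succ]
    have h1 : (fun i => x (Equiv.swap 0 k (e i).succ)) =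
        (fun i => x (Equiv.swap 0 k i.succ)) ∘ e := rfl
    have h2 : (fun j => y (Equiv.swap 0 l (f j).succ)) =
        (fun j => y (Equiv.swap 0 l j.succ)) ∘ f := rfl
    rw [h1, h2, hA, hB]
    simp only [Units.val_mul, Int.cast_mul, apply_ite (fun (u : ℤˣ) => ((u : ℤ) : ℝ)),
      Units.val_one, Units.val_neg, Int.cast_one, Int.cast_neg]
    exact cancel_helper _ _ _ _ _ _ (sgn_sq e) (sgn_sq f)
  simp only [inner]
  simp only [Finset.sum_const, Finset.card_univ, Fintype.card_perm, Fintype.card_fin,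
    smul_eq_mul, nsmul_eq_mul]
  simp only [Finset.mul_sum]
  refine Finset.sum_congr rfl fun k _ => ?_
  refine Finset.sum_congr rfl fun l _ => ?_
  have hP : ((P.factorial : ℕ) : ℝ) ≠ 0 := Nat.cast_ne_zero.mpr (Nat.factorial_pos P).ne'
  have hQ : ((Q.factorial : ℕ) : ℝ) ≠ 0 := Nat.cast_ne_zero.mpr (Nat.factorial_pos Q).ne'
  rw [Nat.cast_mul]
  field_simp

lemma mul_g_formula {n : ℕ} (θ : DoubleForm n) (P Q : ℕ)
    (hA : ∀ (σ : Perm (Fin P)) (x : Fin P → Fin n) (y : Fin Q → Fin n),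
        θ P Q (x ∘ σ) y = ((Perm.sign σ : ℤ) : ℝ) * θ P Q x y)
    (hB : ∀ (τ : Perm (Fin Q)) (x : Fin P → Fin n) (y : Fin Q → Fin n),
        θ P Q x (y ∘ τ) = ((Perm.sign τ : ℤ) : ℝ) * θ P Q x y)
    (x : Fin (P+1) → Fin n) (y : Fin (Q+1) → Fin n) :
    dfMul n (dfG n) θ (P+1) (Q+1) x y =
      ∑ k : Fin (P+1), ∑ l : Fin (Q+1),
        (if k = 0 then (1:ℝ) else -1) * (if l = 0 then (1:ℝ) else -1) *
        (if x k = y l then (1:ℝ) else 0) *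
        θ P Q (fun i => x (Equiv.swap 0 k i.succ)) (fun j => y (Equiv.swap 0 l j.succ)) := by
  unfold dfMul
  rw [Fintype.sum_eq_single (1 : Fin (P+2))]
  · rw [Fintype.sum_eq_single (1 : Fin (Q+2))]
    · simp only [Fin.val_one, Nat.factorial_one, one_mul, dfG_one_one, df_idx_red,
        fin_one_add, Fin.castLE_zero, Nat.add_sub_cancel]
      simp only [dfG_one_one, Fin.castLE_zero, mul_one]
      exact perm_sum_eval θ P Q hA hB x y
    · intro a ha
      rw [mul_eq_zero]; right
      refine Finset.sum_eq_zero fun σ _ => Finset.sum_eq_zero fun τ _ => ?_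
      rw [mul_eq_zero]; right
      rw [mul_eq_zero]; left
      apply dfG_eq_zero
      rintro ⟨h1, h2⟩
      exact ha (Fin.ext (by simp [h2, Fin.val_one]))
  · intro a ha
    refine Finset.sum_eq_zero fun q₁ _ => ?_
    rw [mul_eq_zero]; right
    refine Finset.sum_eq_zero fun σ _ => Finset.sum_eq_zero fun τ _ => ?_
    rw [mul_eq_zero]; right
    rw [mul_eq_zero]; left
    apply dfG_eq_zero
    rintro ⟨h1, h2⟩
    exact ha (Fin.ext (by simp [h1, Fin.val_one]))

lemma cons_swap_zero {n m : ℕ} (i : Fin n) (X : Fin m → Fin n) :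
    (fun i' : Fin m => (Fin.cons i X : Fin (m+1) → Fin n) (Equiv.swap 0 0 i'.succ)) = X := by
  funext i'
  simp [Equiv.swap_self, Fin.cons_succ]

lemma cons_swap_eq_update {n m : ℕ} (X : Fin m → Fin n) (k' : Fin m) (i : Fin n) :
    (fun i' : Fin m => (Fin.cons i X : Fin (m+1) → Fin n) (Equiv.swap 0 k'.succ i'.succ)) =
      Function.update X k' i := by
  funext i'
  rcases eq_or_ne i' k' with h | h
  · subst h
    rw [Equiv.swap_apply_def]
    simp [Fin.succ_ne_zero, Function.update_self]
  · have hs : i'.succ ≠ k'.succ := fun hc => h (Fin.succ_injective _ hc)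
    rw [Equiv.swap_apply_def]
    simp [Fin.succ_ne_zero, hs, Function.update_of_ne h, Fin.cons_succ]

lemma cons_comp {n m : ℕ} (i : Fin n) (A : Fin m → Fin n) (σ : Perm (Fin m)) :
    (Fin.cons i (A ∘ σ) : Fin (m+1) → Fin n) =
      (Fin.cons i A : Fin (m+1) → Fin n) ∘ (Equiv.Perm.decomposeFin.symm (0, σ)) := by
  funext j
  refine Fin.cases ?_ (fun j => ?_) j
  · simp [Equiv.Perm.decomposeFin_symm_apply_zero]
  · simp [Equiv.Perm.decomposeFin_symm_apply_succ, Equiv.swap_self, Fin.cons_succ]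

lemma dfContr_eq_zero {n p q : ℕ} (ω : DoubleForm n) (hω : dfHasBidegree n p q ω)
    (a b : ℕ) (h : ¬(a + 1 = p ∧ b + 1 = q)) : dfContr n ω a b = 0 := by
  funext x y
  show (∑ i : Fin n, ω (a + 1) (b + 1) (Fin.cons i x) (Fin.cons i y)) = 0
  refine Finset.sum_eq_zero fun i _ => ?_
  rw [hω.1 _ _ h]
  rfl

lemma dfContr_antisymm_left {n p' q' : ℕ} (ω : DoubleForm n)
    (hω : dfHasBidegree n (p'+1) (q'+1) ω) :
    ∀ (σ : Perm (Fin p')) (x : Fin p' → Fin n) (y : Fin q' → Fin n),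
      dfContr n ω p' q' (x ∘ σ) y = ((Perm.sign σ : ℤ) : ℝ) * dfContr n ω p' q' x y := by
  intro σ x y
  show (∑ i : Fin n, ω (p'+1) (q'+1) (Fin.cons i (x ∘ σ)) (Fin.cons i y)) = _ * ∑ i : Fin n, _
  rw [Finset.mul_sum]
  refine Finset.sum_congr rfl fun i _ => ?_
  rw [cons_comp]
  rw [hω.2.1 (Equiv.Perm.decomposeFin.symm (0, σ)) (Fin.cons i x) (Fin.cons i y),
    Equiv.Perm.decomposeFin.symm_sign]
  simp

lemma dfContr_antisymm_right {n p' q' : ℕ} (ω : DoubleForm n)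
    (hω : dfHasBidegree n (p'+1) (q'+1) ω) :
    ∀ (τ : Perm (Fin q')) (x : Fin p' → Fin n) (y : Fin q' → Fin n),
      dfContr n ω p' q' x (y ∘ τ) = ((Perm.sign τ : ℤ) : ℝ) * dfContr n ω p' q' x y := by
  intro τ x y
  show (∑ i : Fin n, ω (p'+1) (q'+1) (Fin.cons i x) (Fin.cons i (y ∘ τ))) = _ * ∑ i : Fin n, _
  rw [Finset.mul_sum]
  refine Finset.sum_congr rfl fun i _ => ?_
  rw [cons_comp]
  rw [hω.2.2 (Equiv.Perm.decomposeFin.symm (0, τ)) (Fin.cons i x) (Fin.cons i y),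
    Equiv.Perm.decomposeFin.symm_sign]
  simp

lemma cons_swap_outer {n m : ℕ} (X : Fin (m+1) → Fin n) (k : Fin (m+1)) (i : Fin n) :
    (Fin.cons i (fun i' : Fin m => X (Equiv.swap 0 k i'.succ)) : Fin (m+1) → Fin n) =
      (Function.update X k i) ∘ (Equiv.Perm.decomposeFin.symm (k, 1)) := by
  rw [Equiv.Perm.decomposeFin_symm_of_one]
  funext j
  refine Fin.cases ?_ (fun j => ?_) j
  · rw [Fin.cons_zero, Function.comp_apply, Equiv.swap_apply_left, Function.update_self]
  · simp only [Fin.cons_succ, Function.comp_apply]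
    have hne : Equiv.swap 0 k j.succ ≠ k := by
      rcases eq_or_ne k 0 with rfl | hk
      · simp [Equiv.swap_self, Fin.succ_ne_zero]
      · rw [Equiv.swap_apply_def]
        simp only [Fin.succ_ne_zero j, if_false]
        split
        · exact fun hc => hk hc.symm
        · next hcond => exact hcond
    rw [Function.update_of_ne hne]

lemma cancel2 (a b d S : ℝ) (ha : a * a = 1) (hb : b * b = 1) :
    a * b * d * (a * (b * S)) = d * S := by
  have h : a * b * d * (a * (b * S)) = d * S * (a * a) * (b * b) := by ring
  rw [h, ha, hb, mul_one, mul_one]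

noncomputable def tt (n p q : ℕ) (ω : DoubleForm n) (X : Fin p → Fin n)
    (Y : Fin q → Fin n) (i : Fin n) (k : Fin (p+1)) (l : Fin (q+1)) : ℝ :=
  (if k = 0 then (1:ℝ) else -1) * (if l = 0 then (1:ℝ) else -1) *
    (if (Fin.cons i X : Fin (p+1) → Fin n) k = (Fin.cons i Y : Fin (q+1) → Fin n) l
      then (1:ℝ) else 0) *
    ω p q (fun i' => (Fin.cons i X : Fin (p+1) → Fin n) (Equiv.swap 0 k i'.succ))
      (fun j => (Fin.cons i Y : Fin (q+1) → Fin n) (Equiv.swap 0 l j.succ))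

lemma tt_00 {n p q : ℕ} (ω : DoubleForm n) (X : Fin p → Fin n) (Y : Fin q → Fin n)
    (i : Fin n) : tt n p q ω X Y i 0 0 = ω p q X Y := by
  unfold tt
  rw [cons_swap_zero, cons_swap_zero]
  simp

lemma tt_0succ {n p q : ℕ} (ω : DoubleForm n) (X : Fin p → Fin n) (Y : Fin q → Fin n)
    (l' : Fin q) : ∑ i : Fin n, tt n p q ω X Y i 0 l'.succ = -(ω p q X Y) := by
  have key : ∀ i : Fin n, tt n p q ω X Y i 0 l'.succ =
      if i = Y l' then -(ω p q X Y) else 0 := by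
    intro i
    unfold tt
    rw [cons_swap_zero, cons_swap_eq_update]
    rcases eq_or_ne i (Y l') with h | h
    · subst h
      simp [Fin.succ_ne_zero, Function.update_eq_self, Fin.cons_zero, Fin.cons_succ]
    · simp [Fin.succ_ne_zero, Fin.cons_zero, Fin.cons_succ, h]
  simp only [key]
  simp [Finset.sum_ite_eq', Finset.mem_univ]

lemma tt_succ0 {n p q : ℕ} (ω : DoubleForm n) (X : Fin p → Fin n) (Y : Fin q → Fin n)
    (k' : Fin p) : ∑ i : Fin n, tt n p q ω X Y i k'.succ 0 = -(ω p q X Y) := by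
  have key : ∀ i : Fin n, tt n p q ω X Y i k'.succ 0 =
      if X k' = i then -(ω p q X Y) else 0 := by
    intro i
    unfold tt
    rw [cons_swap_zero, cons_swap_eq_update]
    rcases eq_or_ne (X k') i with h | h
    · rw [← h]
      simp [Fin.succ_ne_zero, Function.update_eq_self, Fin.cons_zero, Fin.cons_succ]
    · simp [Fin.succ_ne_zero, Fin.cons_zero, Fin.cons_succ, h]
  simp only [key]
  simp [Finset.sum_ite_eq, Finset.mem_univ]

lemma tt_succsucc {n p q : ℕ} (ω : DoubleForm n) (X : Fin p → Fin n) (Y : Fin q → Fin n)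
    (k' : Fin p) (l' : Fin q) : ∑ i : Fin n, tt n p q ω X Y i k'.succ l'.succ =
      (if X k' = Y l' then (1:ℝ) else 0) *
        ∑ i : Fin n, ω p q (Function.update X k' i) (Function.update Y l' i) := by
  rw [Finset.mul_sum]
  refine Finset.sum_congr rfl fun i _ => ?_
  unfold tt
  rw [cons_swap_eq_update, cons_swap_eq_update]
  simp only [Fin.succ_ne_zero, if_false, Fin.cons_succ, ite_false]
  ring

lemma rhs_eq {n p' q' : ℕ} (ω : DoubleForm n) (hω : dfHasBidegree n (p'+1) (q'+1) ω)
    (X : Fin (p'+1) → Fin n) (Y : Fin (q'+1) → Fin n) :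
    dfMul n (dfG n) (dfContr n ω) (p'+1) (q'+1) X Y =
      ∑ k : Fin (p'+1), ∑ l : Fin (q'+1),
        (if X k = Y l then (1:ℝ) else 0) *
          ∑ i : Fin n, ω (p'+1) (q'+1) (Function.update X k i) (Function.update Y l i) := by
  rw [mul_g_formula (dfContr n ω) p' q' (dfContr_antisymm_left ω hω)
      (dfContr_antisymm_right ω hω) X Y]
  refine Finset.sum_congr rfl fun k _ => Finset.sum_congr rfl fun l _ => ?_
  have hcontr : dfContr n ω p' q' (fun i' => X (Equiv.swap 0 k i'.succ))
      (fun j => Y (Equiv.swap 0 l j.succ)) =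
      ∑ i : Fin n, ((if k = 0 then (1:ℝ) else -1) *
        ((if l = 0 then (1:ℝ) else -1) *
          ω (p'+1) (q'+1) (Function.update X k i) (Function.update Y l i))) := by
    show (∑ i : Fin n, ω (p'+1) (q'+1) (Fin.cons i _) (Fin.cons i _)) = _
    refine Finset.sum_congr rfl fun i _ => ?_
    rw [cons_swap_outer, cons_swap_outer]
    rw [hω.2.1 (Equiv.Perm.decomposeFin.symm (k, 1)) _ _,
        hω.2.2 (Equiv.Perm.decomposeFin.symm (l, 1)) _ _]
    rw [Equiv.Perm.decomposeFin.symm_sign, Equiv.Perm.decomposeFin.symm_sign]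
    simp only [map_one, mul_one, apply_ite (fun (u : ℤˣ) => ((u : ℤ) : ℝ)), Units.val_one,
      Units.val_neg, Int.cast_one, Int.cast_neg]
  rw [hcontr]
  rw [← Finset.mul_sum, ← Finset.mul_sum]
  have hk : (if k = 0 then (1:ℝ) else -1) * (if k = 0 then (1:ℝ) else -1) = 1 := by
    split <;> norm_num
  have hl : (if l = 0 then (1:ℝ) else -1) * (if l = 0 then (1:ℝ) else -1) = 1 := by
    split <;> norm_num
  exact cancel2 _ _ _ _ hk hl

/-- For a double form `ω` of bidegree `(p, q)`,
`c_g(g·ω) = g·(c_g ω) + (n − p − q)·ω`. -/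
theorem stmt_0 (n p q : ℕ) (ω : DoubleForm n) (hω : dfHasBidegree n p q ω) :
    dfContr n (dfMul n (dfG n) ω) =
      dfMul n (dfG n) (dfContr n ω) + ((n : ℝ) - (p : ℝ) - (q : ℝ)) • ω := by
  funext P Q X Y
  simp only [Pi.add_apply, Pi.smul_apply, smul_eq_mul]
  by_cases hPQ : P = p ∧ Q = q
  · obtain ⟨h1, h2⟩ := hPQ
    subst h1; subst h2
    have hL : dfContr n (dfMul n (dfG n) ω) P Q X Y =
        (n:ℝ) * ω P Q X Y + (Q:ℝ) * -(ω P Q X Y) + ((P:ℝ) * -(ω P Q X Y) +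
          ∑ k' : Fin P, ∑ l' : Fin Q, (if X k' = Y l' then (1:ℝ) else 0) *
            ∑ i : Fin n, ω P Q (Function.update X k' i) (Function.update Y l' i)) := by
      show (∑ i : Fin n, dfMul n (dfG n) ω (P+1) (Q+1) (Fin.cons i X) (Fin.cons i Y)) = _
      have h1 : ∀ i : Fin n, dfMul n (dfG n) ω (P+1) (Q+1) (Fin.cons i X) (Fin.cons i Y) =
          ∑ k : Fin (P+1), ∑ l : Fin (Q+1), tt n P Q ω X Y i k l :=
        fun i => mul_g_formula ω P Q hω.2.1 hω.2.2 _ _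
      simp only [h1]
      rw [Finset.sum_comm]
      have h2 : ∀ k, (∑ i : Fin n, ∑ l : Fin (Q+1), tt n P Q ω X Y i k l)
          = ∑ l : Fin (Q+1), ∑ i : Fin n, tt n P Q ω X Y i k l :=
        fun k => Finset.sum_comm
      simp only [h2]
      simp only [Fin.sum_univ_succ]
      simp only [tt_00, tt_0succ, tt_succ0, tt_succsucc]
      simp only [Finset.sum_const, Finset.card_univ, Fintype.card_fin, nsmul_eq_mul,
        Finset.sum_add_distrib]
    have hR : dfMul n (dfG n) (dfContr n ω) P Q X Y =
        ∑ k' : Fin P, ∑ l' : Fin Q, (if X k' = Y l' then (1:ℝ) else 0) *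
          ∑ i : Fin n, ω P Q (Function.update X k' i) (Function.update Y l' i) := by
      match P, Q, X, Y, hω with
      | 0, Q, X, Y, hω =>
        rw [mul_g_eq_zero (dfContr n ω) 0 Q
          (fun a b hab => dfContr_eq_zero ω hω a b (by omega)) 0 Q (by omega) X Y]
        simp
      | P+1, 0, X, Y, hω =>
        rw [mul_g_eq_zero (dfContr n ω) (P+1) 0
          (fun a b hab => dfContr_eq_zero ω hω a b (by omega)) (P+1) 0 (by omega) X Y]
        simp
      | P+1, Q+1, X, Y, hω => exact rhs_eq ω hω X Y
    rw [hL, hR]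
    ring
  · have hL : dfContr n (dfMul n (dfG n) ω) P Q X Y = 0 := by
      show (∑ i : Fin n, dfMul n (dfG n) ω (P+1) (Q+1) (Fin.cons i X) (Fin.cons i Y)) = 0
      refine Finset.sum_eq_zero fun i _ => ?_
      exact mul_g_eq_zero ω p q hω.1 (P+1) (Q+1) (by omega) _ _
    have hR2 : ω P Q X Y = 0 := by
      rw [hω.1 P Q hPQ]; rfl
    have hR1 : dfMul n (dfG n) (dfContr n ω) P Q X Y = 0 := by
      by_cases hpq : 1 ≤ p ∧ 1 ≤ q
      · obtain ⟨p', rfl⟩ : ∃ p', p = p' + 1 := ⟨p - 1, by omega⟩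
        obtain ⟨q', rfl⟩ : ∃ q', q = q' + 1 := ⟨q - 1, by omega⟩
        exact mul_g_eq_zero (dfContr n ω) p' q'
          (fun a b hab => dfContr_eq_zero ω hω a b (by omega)) P Q (by omega) X Y
      · exact mul_g_eq_zero (dfContr n ω) P Q
          (fun a b hab => dfContr_eq_zero ω hω a b (by omega)) P Q (by omega) X Y
    rw [hL, hR1, hR2]
    ring
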